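/- Let S ∈ ℝ^{r₁×r₂×⋯×r_d} with ‖S‖₁ ≤ τ, fix j ∈ {1,…,d}, let V_i ∈ ℝ^{n_i×r_i} for each i ≠ j be matrices each of whose columns has ℓ2 norm at most 1, and let W ∈ ℝ^{n_j×r_j} be arbitrary. Then ‖S ×₁ V₁ ⋯ ×_{j−1} V_{j−1} ×_j W ×_{j+1} V_{j+1} ⋯ ×_d V_d‖_F ≤ τ · max_{k∈{1,…,r_j}} ‖W(:,k)‖₂. -/
import Mathlib


open scoped BigOperators

noncomputable section

/-- Frobenius (ℓ2) norm of a finitely-indexed real array. -/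
def frob {ι : Type*} [Fintype ι] (Z : ι → ℝ) : ℝ :=
  Real.sqrt (∑ x, (Z x) ^ 2)

/-- ℓ1 norm of a finitely-indexed real array. -/
def l1 {ι : Type*} [Fintype ι] (Z : ι → ℝ) : ℝ :=
  ∑ x, |Z x|

/-- Tucker product `S ×₁ U₁ ×₂ U₂ ⋯ ×_d U_d`. -/
def tucker {d : ℕ} {n r : Fin d → ℕ} (S : (∀ i, Fin (r i)) → ℝ)
    (U : ∀ i, Fin (n i) → Fin (r i) → ℝ) : (∀ i, Fin (n i)) → ℝ :=
  fun x => ∑ k : ∀ i, Fin (r i), S k * ∏ i, U i (x i) (k i)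

/-- The set `G_{r,s,τ}` of `r`-rank, `s`-sparse tensors whose core has ℓ1 norm at most `τ`
and whose factor-matrix columns have at most `sᵢ` nonzero entries and ℓ2 norm at most 1. -/
def Gset {d : ℕ} (n r s : Fin d → ℕ) (τ : ℝ) : Set ((∀ i, Fin (n i)) → ℝ) :=
  { Z | ∃ (S : (∀ i, Fin (r i)) → ℝ) (U : ∀ i, Fin (n i) → Fin (r i) → ℝ),
      l1 S ≤ τ ∧
      (∀ i j, (Function.support fun a => U i a j).ncard ≤ s i) ∧
      (∀ i j, Real.sqrt (∑ a, (U i a j) ^ 2) ≤ 1) ∧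
      Z = tucker S U }


lemma frob_eq_norm {ι : Type*} [Fintype ι] (Z : ι → ℝ) :
    frob Z = ‖(WithLp.linearEquiv 2 ℝ (ι → ℝ)).symm Z‖ := by
  rw [EuclideanSpace.norm_eq]
  simp [frob, Real.norm_eq_abs, sq_abs]

lemma frob_sum_le {ι κ : Type*} [Fintype ι] [Fintype κ] (f : κ → ι → ℝ) :
    frob (fun x => ∑ k, f k x) ≤ ∑ k, frob (f k) := by
  simp_rw [frob_eq_norm]
  have h : (WithLp.linearEquiv 2 ℝ (ι → ℝ)).symm (fun x => ∑ k, f k x)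
      = ∑ k, (WithLp.linearEquiv 2 ℝ (ι → ℝ)).symm (f k) := by
    rw [← map_sum]
    congr 1
    funext x
    simp [Finset.sum_apply]
  rw [h]
  exact norm_sum_le _ _

lemma frob_smul (c : ℝ) {ι : Type*} [Fintype ι] (g : ι → ℝ) :
    frob (fun x => c * g x) = |c| * frob g := by
  simp only [frob, mul_pow, ← Finset.mul_sum]
  rw [Real.sqrt_mul (sq_nonneg c), Real.sqrt_sq_eq_abs]

lemma sqrt_prod' {ι : Type*} [Fintype ι] (f : ι → ℝ) (h : ∀ i, 0 ≤ f i) :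
    Real.sqrt (∏ i, f i) = ∏ i, Real.sqrt (f i) := by
  have h2 : ∏ i, f i = (∏ i, Real.sqrt (f i)) ^ 2 := by
    rw [← Finset.prod_pow]
    exact Finset.prod_congr rfl fun i _ => (Real.sq_sqrt (h i)).symm
  rw [h2, Real.sqrt_sq (Finset.prod_nonneg fun i _ => Real.sqrt_nonneg _)]

/-- Tucker product with one factor replaced by an arbitrary matrix `W` has
Frobenius norm at most `τ · max_k ‖W(:,k)‖₂`. -/
theorem tucker_one_slot_bound
    {d : ℕ} {n r : Fin d → ℕ} {τ : ℝ} (hτ : 0 < τ)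
    (S : (∀ i, Fin (r i)) → ℝ) (hS : l1 S ≤ τ)
    (j : Fin d) (hrj : 0 < r j)
    (V : ∀ i, Fin (n i) → Fin (r i) → ℝ)
    (hV : ∀ i, i ≠ j → ∀ k, Real.sqrt (∑ a, (V i a k) ^ 2) ≤ 1)
    (W : Fin (n j) → Fin (r j) → ℝ) :
    frob (tucker S (Function.update V j W)) ≤
      τ * ⨆ k : Fin (r j), Real.sqrt (∑ a, (W a k) ^ 2) := by
  set U := Function.update V j W with hU
  set M := ⨆ k : Fin (r j), Real.sqrt (∑ a, (W a k) ^ 2) with hMdef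
  haveI : Nonempty (Fin (r j)) := ⟨⟨0, hrj⟩⟩
  have hM : ∀ k : Fin (r j), Real.sqrt (∑ a, (W a k) ^ 2) ≤ M := fun k =>
    le_ciSup (f := fun k : Fin (r j) => Real.sqrt (∑ a, (W a k) ^ 2))
      (Set.Finite.bddAbove (Set.finite_range _)) k
  have hM0 : 0 ≤ M := le_trans (Real.sqrt_nonneg _) (hM ⟨0, hrj⟩)
  have key : ∀ k : ∀ i, Fin (r i),
      frob (fun x : ∀ i, Fin (n i) => ∏ i, U i (x i) (k i)) ≤ M := by
    intro k
    have hrank1 : frob (fun x : ∀ i, Fin (n i) => ∏ i, U i (x i) (k i))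
        = ∏ i, Real.sqrt (∑ a, (U i a (k i)) ^ 2) := by
      rw [frob]
      have h1 : ∑ x : ∀ i, Fin (n i), (∏ i, U i (x i) (k i)) ^ 2
          = ∏ i, ∑ a, (U i a (k i)) ^ 2 := by
        simp_rw [← Finset.prod_pow]
        rw [Finset.prod_univ_sum]
        rw [Fintype.piFinset_univ]
      rw [h1, sqrt_prod' _ (fun i => Finset.sum_nonneg fun a _ => sq_nonneg _)]
    rw [hrank1, ← Finset.mul_prod_erase _ _ (Finset.mem_univ j)]
    have hUj : ∀ a, U j a (k j) = W a (k j) := by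
      intro a; rw [hU, Function.update_self]
    have hterm : Real.sqrt (∑ a, (U j a (k j)) ^ 2) ≤ M := by
      simp_rw [hUj]; exact hM (k j)
    have hrest : ∏ i ∈ Finset.univ.erase j, Real.sqrt (∑ a, (U i a (k i)) ^ 2) ≤ 1 := by
      apply Finset.prod_le_one
      · intro i _; exact Real.sqrt_nonneg _
      · intro i hi
        have hij : i ≠ j := Finset.ne_of_mem_erase hi
        have : U i = V i := by rw [hU, Function.update_of_ne hij]
        rw [this]; exact hV i hij (k i)
    calc Real.sqrt (∑ a, (U j a (k j)) ^ 2) *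
          ∏ i ∈ Finset.univ.erase j, Real.sqrt (∑ a, (U i a (k i)) ^ 2)
        ≤ M * 1 := mul_le_mul hterm hrest
          (Finset.prod_nonneg fun i _ => Real.sqrt_nonneg _) hM0
      _ = M := mul_one M
  show frob (fun x : ∀ i, Fin (n i) =>
      ∑ k : ∀ i, Fin (r i), S k * ∏ i, U i (x i) (k i)) ≤ τ * M
  refine le_trans (frob_sum_le
    (fun (k : ∀ i, Fin (r i)) (x : ∀ i, Fin (n i)) => S k * ∏ i, U i (x i) (k i))) ?_
  have h2 : ∀ k : ∀ i, Fin (r i),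
      frob (fun x : ∀ i, Fin (n i) => S k * ∏ i, U i (x i) (k i)) ≤ |S k| * M := by
    intro k
    rw [frob_smul]
    exact mul_le_mul_of_nonneg_left (key k) (abs_nonneg _)
  refine le_trans (Finset.sum_le_sum fun k _ => h2 k) ?_
  rw [← Finset.sum_mul]
  exact mul_le_mul_of_nonneg_right hS hM0
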